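/- Let n = 2m be a positive even integer. Then the cardinality of the set {(c,J) : c ∈ ℤ, J ⊆ {0,…,n}, (c,|J|) ∈ F_n} equals (n+1)!/((n/2)!)^2; equivalently, Σ_{(c,ℓ)∈F_n} binom(n+1, ℓ) = (2m+1)!/(m!)^2. -/

import Mathlib

def inF (n : ℕ) (c ℓ : ℤ) : Prop :=
  0 ≤ ℓ ∧ ℓ ≤ (n : ℤ) + 1 ∧
    (((ℓ : ℚ) ≤ (n : ℚ) / 2 ∧ (ℓ : ℚ) - (n : ℚ) / 4 ≤ (c : ℚ) ∧ (c : ℚ) ≤ (n : ℚ) / 4) ∨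
      ((n : ℚ) / 2 + 1 ≤ (ℓ : ℚ) ∧ ((n : ℚ) + 2) / 4 ≤ (c : ℚ) ∧
        (c : ℚ) ≤ (ℓ : ℚ) - ((n : ℚ) + 2) / 4))

lemma inF_iff (m : ℕ) (c ℓ : ℤ) :
    inF (2*m) c ℓ ↔ 0 ≤ ℓ ∧ ℓ ≤ 2*m+1 ∧
      ((ℓ ≤ m ∧ 2*ℓ ≤ 2*c + m ∧ 2*c ≤ m) ∨
        ((m:ℤ)+1 ≤ ℓ ∧ (m:ℤ)+1 ≤ 2*c ∧ 2*c + m + 1 ≤ 2*ℓ)) := by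
  unfold inF
  constructor
  · rintro ⟨h0, h1, h2 | h2⟩
    · refine ⟨h0, by exact_mod_cast h1, Or.inl ⟨?_, ?_, ?_⟩⟩
      · have : (ℓ:ℚ) ≤ (m:ℚ) := by push_cast at h2 ⊢; linarith [h2.1]
        exact_mod_cast this
      · have : (2*ℓ:ℚ) ≤ 2*c + m := by push_cast at h2 ⊢; linarith [h2.2.1]
        exact_mod_cast this
      · have : (2*c:ℚ) ≤ m := by push_cast at h2 ⊢; linarith [h2.2.2]
        exact_mod_cast this
    · refine ⟨h0, by exact_mod_cast h1, Or.inr ⟨?_, ?_, ?_⟩⟩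
      · have : (m:ℚ)+1 ≤ ℓ := by push_cast at h2 ⊢; linarith [h2.1]
        exact_mod_cast this
      · have : (m:ℚ)+1 ≤ 2*c := by push_cast at h2 ⊢; linarith [h2.2.1]
        exact_mod_cast this
      · have : (2*c:ℚ) + m + 1 ≤ 2*ℓ := by push_cast at h2 ⊢; linarith [h2.2.2]
        exact_mod_cast this
  · rintro ⟨h0, h1, h2 | h2⟩
    · refine ⟨h0, by exact_mod_cast h1, Or.inl ⟨?_, ?_, ?_⟩⟩
      · have : (ℓ:ℚ) ≤ (m:ℚ) := by exact_mod_cast h2.1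
        push_cast; linarith
      · have : (2*ℓ:ℚ) ≤ 2*c + m := by exact_mod_cast h2.2.1
        push_cast at this ⊢; linarith
      · have : (2*c:ℚ) ≤ m := by exact_mod_cast h2.2.2
        push_cast at this ⊢; linarith
    · refine ⟨h0, by exact_mod_cast h1, Or.inr ⟨?_, ?_, ?_⟩⟩
      · have : (m:ℚ)+1 ≤ ℓ := by exact_mod_cast h2.1
        push_cast at this ⊢; linarith
      · have : (m:ℚ)+1 ≤ 2*c := by exact_mod_cast h2.2.1
        push_cast at this ⊢; linarith
      · have : (2*c:ℚ) + m + 1 ≤ 2*ℓ := by exact_mod_cast h2.2.2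
        push_cast at this ⊢; linarith

/-- Lower endpoint of the `c`-interval for level `ℓ`. -/
def myLo (m ℓ : ℕ) : ℤ := if ℓ ≤ m then (ℓ:ℤ) - ((m/2 : ℕ) : ℤ) else (((m+2)/2 : ℕ) : ℤ)

/-- Upper endpoint of the `c`-interval for level `ℓ`. -/
def myHi (m ℓ : ℕ) : ℤ := if ℓ ≤ m then ((m/2 : ℕ) : ℤ) else (ℓ:ℤ) - (((m+2)/2 : ℕ) : ℤ)

/-- Number of valid `c` for level `ℓ`. -/
def myG (m ℓ : ℕ) : ℕ := if ℓ ≤ m then 2*(m/2)+1-ℓ else ℓ - (2*(m/2)+1)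

lemma mem_iff (m ℓ : ℕ) (hℓ : ℓ ≤ 2*m+1) (c : ℤ) :
    inF (2*m) c (ℓ:ℤ) ↔ c ∈ Finset.Icc (myLo m ℓ) (myHi m ℓ) := by
  rw [inF_iff, Finset.mem_Icc]
  unfold myLo myHi
  split <;> omega

lemma card_Icc_eq (m ℓ : ℕ) : (Finset.Icc (myLo m ℓ) (myHi m ℓ)).card = myG m ℓ := by
  rw [Int.card_Icc]
  unfold myLo myHi myG
  split <;> omega

lemma sum_id (N : ℕ) : ∀ k, 2*k < N →
    ∑ ℓ ∈ Finset.range (k+1), (N - 2*ℓ) * N.choose ℓ = (k+1) * N.choose (k+1) := by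
  intro k
  induction k with
  | zero => intro h; simp [Nat.choose_one_right]
  | succ k ih =>
    intro h
    rw [Finset.sum_range_succ, ih (by omega)]
    have h1 : (k+1) * N.choose (k+1) + (N - 2*(k+1)) * N.choose (k+1)
        = N.choose (k+1) * (N - (k+1)) := by
      have : (k+1) + (N - 2*(k+1)) = N - (k+1) := by omega
      rw [← Nat.add_mul, this, Nat.mul_comm]
    rw [h1, ← Nat.choose_succ_right_eq]
    ring

lemma sum_g (m : ℕ) :
    ∑ k ∈ Finset.range (2*m+1+1), (2*m+1).choose k * myG m k
      = (m+1) * (2*m+1).choose (m+1) := by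
  have hsplit : 2*m+1+1 = (m+1) + (m+1) := by omega
  rw [hsplit, Finset.sum_range_add, ← Finset.sum_range_reflect (fun i => (2*m+1).choose (m+1+i) * myG m (m+1+i)) (m+1),
    ← Finset.sum_add_distrib]
  rw [show (m+1) * (2*m+1).choose (m+1) = ∑ ℓ ∈ Finset.range (m+1), (2*m+1-2*ℓ) * (2*m+1).choose ℓ from (sum_id (2*m+1) m (by omega)).symm]
  refine Finset.sum_congr rfl fun j hj => ?_
  simp only [Finset.mem_range] at hj
  have hj' : j ≤ m := by omega
  have h1 : m + 1 + (m + 1 - 1 - j) = 2*m+1-j := by omega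
  rw [h1, Nat.choose_symm (by omega : j ≤ 2*m+1)]
  have hg : myG m j + myG m (2*m+1-j) = 2*m+1-2*j := by
    simp only [myG, if_pos hj', if_neg (show ¬(2*m+1-j ≤ m) by omega)]
    omega
  rw [← Nat.mul_add, hg, Nat.mul_comm]

theorem stmt_3 (m : ℕ) (hm : 0 < m) :
    {p : ℤ × Finset (Fin (2 * m + 1)) | inF (2 * m) p.1 (p.2.card : ℤ)}.ncard
      = (2 * m + 1).factorial / m.factorial ^ 2 := by
  classical
  set T : Finset (ℤ × Finset (Fin (2*m+1))) :=
    Finset.univ.biUnion (fun J : Finset (Fin (2*m+1)) =>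
      (Finset.Icc (myLo m J.card) (myHi m J.card)).image fun c => (c, J)) with hT
  have hcard : ∀ J : Finset (Fin (2*m+1)), J.card ≤ 2*m+1 := fun J => by
    simpa using Finset.card_le_univ J
  have hset : {p : ℤ × Finset (Fin (2 * m + 1)) | inF (2 * m) p.1 (p.2.card : ℤ)} = ↑T := by
    ext p
    simp only [Set.mem_setOf_eq, Finset.mem_coe, hT, Finset.mem_biUnion, Finset.mem_univ,
      true_and, Finset.mem_image]
    constructor
    · intro h
      exact ⟨p.2, p.1, (mem_iff m p.2.card (hcard p.2) p.1).1 h, rfl⟩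
    · rintro ⟨J, c, hc, rfl⟩
      exact (mem_iff m J.card (hcard J) c).2 hc
  rw [hset, Set.ncard_coe_finset, hT]
  rw [Finset.card_biUnion (by
    intro a _ b _ hab
    simp only [Finset.disjoint_left, Finset.mem_image]
    rintro p ⟨c, _, rfl⟩ ⟨c', _, h⟩
    exact hab (congrArg Prod.snd h).symm)]
  have himg : ∀ J : Finset (Fin (2*m+1)),
      ((Finset.Icc (myLo m J.card) (myHi m J.card)).image fun c => (c, J)).card = myG m J.card := by
    intro J
    rw [Finset.card_image_of_injective _ (fun a b h => (congrArg Prod.fst h)), card_Icc_eq]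
  simp_rw [himg]
  -- group by cardinality
  have hgroup : ∑ J : Finset (Fin (2*m+1)), myG m J.card
      = ∑ k ∈ Finset.range (2*m+1+1), (2*m+1).choose k * myG m k := by
    rw [← Finset.powerset_univ, Finset.powerset_card_disjiUnion]
    erw [Finset.sum_disjiUnion]
    refine Finset.sum_congr (by simp) fun k hk => ?_
    have : ∀ t ∈ Finset.powersetCard k (Finset.univ : Finset (Fin (2*m+1))),
        myG m t.card = myG m k := by
      intro t ht
      rw [Finset.mem_powersetCard_univ.1 ht]
    rw [Finset.sum_congr rfl this, Finset.sum_const, Finset.card_powersetCard,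
      Finset.card_univ, Fintype.card_fin, smul_eq_mul]
  rw [hgroup, sum_g]
  -- factorial arithmetic
  have key := Nat.choose_mul_factorial_mul_factorial (show m+1 ≤ 2*m+1 by omega)
  have h2 : 2*m+1 - (m+1) = m := by omega
  rw [h2] at key
  have : (2*m+1).factorial = (m+1) * (2*m+1).choose (m+1) * m.factorial ^ 2 := by
    rw [← key, Nat.factorial_succ]
    ring
  rw [this, Nat.mul_div_cancel _ (by positivity)]
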